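/- Let N be a classical channel with finite input alphabet X and finite output alphabet Y, and let D be a non-signaling correlation with input alphabets R, S and output alphabets P, Q, where m := |P|. Then Succ(N, D) − 1/2 ≤ [ 1 + (1 − 1/m)·(1 − loc(D)) ]·(Succ(N) − 1/2), where loc(D) is the local fraction of D. -/

import Mathlib

open scoped Matrix Kronecker BigOperators Matrix.Norms.L2Operator ComplexOrder
open Matrix Finset

noncomputable section

/-- A classical channel: `N x y` is the probability of output `y` given input `x`. -/
def IsChannel {X Y : Type*} [Fintype Y] (N : X → Y → ℝ) : Prop :=
  (∀ x y, 0 ≤ N x y) ∧ ∀ x, ∑ y, N x y = 1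

/-- The unassisted one-shot success probability of a channel. -/
def Succ {X Y : Type*} [Fintype X] [Fintype Y] [Nonempty X]
    (N : X → Y → ℝ) : ℝ :=
  ⨆ z : X × X × (Y → Bool),
    (1 / 2) * (∑ y, if z.2.2 y = false then N z.1 y else 0) +
      (1 / 2) * (∑ y, if z.2.2 y = true then N z.2.1 y else 0)

/-- A two-part input-output correlation: `D r s p q` is the probability of
outputs `(p, q)` given inputs `(r, s)`. -/
def IsCorrelation {R S P Q : Type*} [Fintype P] [Fintype Q]
    (D : R → S → P → Q → ℝ) : Prop :=
  (∀ r s p q, 0 ≤ D r s p q) ∧ ∀ r s, ∑ p, ∑ q, D r s p q = 1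

/-- The non-signaling condition for a two-part correlation. -/
def NonSignaling {R S P Q : Type*} [Fintype P] [Fintype Q]
    (D : R → S → P → Q → ℝ) : Prop :=
  (∀ r p s s', ∑ q, D r s p q = ∑ q, D r s' p q) ∧
    ∀ s q r r', ∑ p, D r s p q = ∑ p, D r' s p q

/-- `SuccD N D` : the optimal success probability for transmitting one bit
across the channel `N` with the assistance of the correlation `D`, i.e. the
maximum over deterministic protocols `(e, f, g, h)`. -/
def SuccD {X Y R S P Q : Type*} [Fintype X] [Fintype Y] [Fintype R] [Fintype S]
    [Fintype P] [Fintype Q] [DecidableEq P] [DecidableEq Q] [DecidableEq Y]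
    [Nonempty X] [Nonempty R] [Nonempty S]
    (N : X → Y → ℝ) (D : R → S → P → Q → ℝ) : ℝ :=
  ⨆ π : (Bool → R) × (Bool → P → X) × (Y → S) × (Y → Q → Bool),
    (1 / 2) * ∑ a : Bool, ∑ p, ∑ y, ∑ q,
      D (π.1 a) (π.2.2.1 y) p q * N (π.2.1 a p) y *
        (if π.2.2.2 y q = a then 1 else 0)

/-- The non-signaling assisted one-shot success probability: the supremum of
`SuccD N D` over all non-signaling correlations `D` (over all finite alphabets). -/
def SuccNS {X Y : Type*} [Fintype X] [Fintype Y] [DecidableEq Y] [Nonempty X]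
    (N : X → Y → ℝ) : ℝ :=
  sSup { v : ℝ | ∃ (nR nS nP nQ : ℕ)
    (D : Fin (nR + 1) → Fin (nS + 1) → Fin nP → Fin nQ → ℝ),
    IsCorrelation D ∧ NonSignaling D ∧ v = SuccD N D }

/-- Local-deterministic correlations. -/
def IsLocalDet {R S P Q : Type*} [DecidableEq P] [DecidableEq Q]
    (D : R → S → P → Q → ℝ) : Prop :=
  ∃ (φ : R → P) (ψ : S → Q), ∀ r s p q,
    D r s p q = (if p = φ r then 1 else 0) * (if q = ψ s then 1 else 0)

/-- Local correlations: finite convex combinations of local-deterministic ones. -/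
def IsLocal {R S P Q : Type*} [DecidableEq P] [DecidableEq Q]
    (D : R → S → P → Q → ℝ) : Prop :=
  ∃ (n : ℕ) (w : Fin n → ℝ) (L : Fin n → R → S → P → Q → ℝ),
    (∀ i, 0 ≤ w i) ∧ (∑ i, w i = 1) ∧ (∀ i, IsLocalDet (L i)) ∧
      ∀ r s p q, D r s p q = ∑ i, w i * L i r s p q

/-- The local fraction of a correlation. -/
def locFrac {R S P Q : Type*} [Fintype P] [Fintype Q] [DecidableEq P] [DecidableEq Q]
    (D : R → S → P → Q → ℝ) : ℝ :=
  sSup { α : ℝ | 0 ≤ α ∧ α ≤ 1 ∧ ∃ L F : R → S → P → Q → ℝ,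
    IsLocal L ∧ IsCorrelation F ∧ NonSignaling F ∧
      ∀ r s p q, D r s p q = α * L r s p q + (1 - α) * F r s p q }

/-- Binary quantum correlations: all four alphabets are `Bool`, and the
correlation arises from local POVM measurements on a shared bipartite state. -/
def IsBinaryQuantum (D : Bool → Bool → Bool → Bool → ℝ) : Prop :=
  ∃ (nA nB : ℕ)
    (Λ : Matrix (Fin (nA + 1) × Fin (nB + 1)) (Fin (nA + 1) × Fin (nB + 1)) ℂ)
    (A : Bool → Bool → Matrix (Fin (nA + 1)) (Fin (nA + 1)) ℂ)
    (B : Bool → Bool → Matrix (Fin (nB + 1)) (Fin (nB + 1)) ℂ),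
    Λ.PosSemidef ∧ Λ.trace = 1 ∧
    (∀ r p, (A r p).PosSemidef) ∧ (∀ r, A r false + A r true = 1) ∧
    (∀ s q, (B s q).PosSemidef) ∧ (∀ s, B s false + B s true = 1) ∧
    ∀ r s p q, (D r s p q : ℂ) = ((A r p ⊗ₖ B s q) * Λ).trace

/-- The binary-quantum assisted one-shot success probability. -/
def SuccQb {X Y : Type*} [Fintype X] [Fintype Y] [DecidableEq Y] [Nonempty X]
    (N : X → Y → ℝ) : ℝ :=
  sSup { v : ℝ | ∃ D : Bool → Bool → Bool → Bool → ℝ,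
    IsBinaryQuantum D ∧ v = SuccD N D }

/-- The radius of a finite family of operators on `ℂ^n`, with respect to the
`ℓ²` operator norm: the minimum over Hermitian `C` of `max_i ‖H i − C‖`. -/
def matRad {n : ℕ} {I : Type*} [Fintype I] [Nonempty I]
    (H : I → Matrix (Fin n) (Fin n) ℂ) : ℝ :=
  ⨅ C : { C : Matrix (Fin n) (Fin n) ℂ // C.IsHermitian }, ⨆ i, ‖H i - C.1‖

/-- The `n`-dimensional entanglement-assisted one-shot success probability. -/
def SuccQn {X Y : Type*} [Fintype X] [Fintype Y] (n : ℕ) (N : X → Y → ℝ) : ℝ :=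
  sSup { v : ℝ | ∃ (Λ : Matrix (Fin n × Fin n) (Fin n × Fin n) ℂ)
      (A : Bool → X → Matrix (Fin n) (Fin n) ℂ)
      (B : Y → Bool → Matrix (Fin n) (Fin n) ℂ),
      Λ.PosSemidef ∧ Λ.trace = 1 ∧
      (∀ a x, (A a x).PosSemidef) ∧ (∀ a, ∑ x, A a x = 1) ∧
      (∀ y b, (B y b).PosSemidef) ∧ (∀ y, B y false + B y true = 1) ∧
      v = (1 / 2) * ∑ a : Bool, ∑ x, ∑ y,
            N x y * (((A a x ⊗ₖ B y a) * Λ).trace).re }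

/-- The channel of Prevedel et al. -/
def Mchan : Fin 4 → Fin 6 → ℝ :=
  ![![1/3, 0, 1/3, 0, 1/3, 0],
    ![1/3, 0, 0, 1/3, 0, 1/3],
    ![0, 1/3, 1/3, 0, 0, 1/3],
    ![0, 1/3, 0, 1/3, 1/3, 0]]

/-- The mod-2 inner product of the binary representations of `i` and `j`
(restricted to the first `s` bits), as a `Bool` (`true` = 1). -/
def binIP (s i j : ℕ) : Bool :=
  decide ((((Finset.range s).filter fun k => i.testBit k ∧ j.testBit k).card) % 2 = 1)

/-- The output distributions `ℓ_i` of the channel `T`: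
`ℓ_i (j, t) = (2^s − 1)⁻¹ · [b_i · b_j = t]`, where the output pair `(j, t)`
with `j ∈ {1, …, 2^s − 1}` is encoded as `(j', t) : Fin (2^s - 1) × Bool`
with `j = j' + 1`, and `t = true` encodes `1`. -/
def Tchan (s : ℕ) : Fin (2 ^ s) → Fin (2 ^ s - 1) × Bool → ℝ :=
  fun i jt =>
    if binIP s i.val (jt.1.val + 1) = jt.2 then ((2 : ℝ) ^ s - 1)⁻¹ else 0

section Aux

variable {X Y R S P Q : Type*} [Fintype X] [Fintype Y] [Fintype R] [Fintype S]
  [Fintype P] [Fintype Q] [DecidableEq P] [DecidableEq Q] [DecidableEq Y]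
  [Nonempty X] [Nonempty R] [Nonempty S]

/-- Per-protocol success value. -/
def protVal (N : X → Y → ℝ) (D : R → S → P → Q → ℝ)
    (e : Bool → R) (f : Bool → P → X) (g : Y → S) (h : Y → Q → Bool) : ℝ :=
  (1 / 2) * ∑ a : Bool, ∑ p, ∑ y, ∑ q,
    D (e a) (g y) p q * N (f a p) y * (if h y q = a then 1 else 0)

lemma succ_bdd (N : X → Y → ℝ) :
    BddAbove (Set.range fun z : X × X × (Y → Bool) =>
      (1 / 2) * (∑ y, if z.2.2 y = false then N z.1 y else 0) +
        (1 / 2) * (∑ y, if z.2.2 y = true then N z.2.1 y else 0)) :=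
  Set.Finite.bddAbove (Set.finite_range _)

lemma succ_ge_half (N : X → Y → ℝ) (hN : IsChannel N) : 1/2 ≤ Succ N := by
  obtain ⟨x⟩ := ‹Nonempty X›
  have := le_ciSup (succ_bdd N) (⟨x, x, fun _ => false⟩ : X × X × (Y → Bool))
  simpa [Succ, hN.2 x] using this

lemma tv_bound (N : X → Y → ℝ) (hN : IsChannel N) (x x' : X) :
    ∑ y, max (N x y - N x' y) 0 ≤ 2 * Succ N - 1 := by
  set g : Y → Bool := fun y => decide (N x y ≤ N x' y) with hg
  have key : ∀ y, (if g y = false then N x y else 0) + (if g y = true then N x' y else 0)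
      = N x' y + max (N x y - N x' y) 0 := by
    intro y
    rcases le_or_gt (N x y) (N x' y) with hc | hc
    · have h1 : g y = true := by simp [hg, hc]
      rw [h1, max_eq_right (by linarith : N x y - N x' y ≤ 0)]
      norm_num
    · have h1 : g y = false := by simp [hg]; linarith
      rw [h1, max_eq_left (by linarith : (0:ℝ) ≤ N x y - N x' y)]
      norm_num
  have hv := le_ciSup (succ_bdd N) (⟨x, x', g⟩ : X × X × (Y → Bool))
  have hsum : (∑ y, if g y = false then N x y else 0) + (∑ y, if g y = true then N x' y else 0)
      = 1 + ∑ y, max (N x y - N x' y) 0 := by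
    rw [← Finset.sum_add_distrib]
    simp_rw [key]
    rw [Finset.sum_add_distrib, hN.2 x']
  have hS : Succ N = ⨆ z : X × X × (Y → Bool),
      (1 / 2) * (∑ y, if z.2.2 y = false then N z.1 y else 0) +
        (1 / 2) * (∑ y, if z.2.2 y = true then N z.2.1 y else 0) := rfl
  rw [← hS] at hv
  simp only at hv
  linarith

lemma sum_indic_mul {α : Type*} [Fintype α] [DecidableEq α] (c : α) (G : α → ℝ) :
    ∑ x, (if x = c then 1 else 0) * G x = G c := by
  simp only [ite_mul, one_mul, zero_mul]
  rw [Finset.sum_ite_eq' Finset.univ c G]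
  simp

lemma protVal_localdet_le (N : X → Y → ℝ) (hN : IsChannel N)
    (L : R → S → P → Q → ℝ) (hL : ∃ (φ : R → P) (ψ : S → Q), ∀ r s p q,
      L r s p q = (if p = φ r then 1 else 0) * (if q = ψ s then 1 else 0))
    (e : Bool → R) (f : Bool → P → X) (g : Y → S) (h : Y → Q → Bool) :
    protVal N L e f g h ≤ Succ N := by
  obtain ⟨φ, ψ, hrep⟩ := hL
  have step : ∀ a : Bool, (∑ p, ∑ y, ∑ q,
      L (e a) (g y) p q * N (f a p) y * (if h y q = a then 1 else 0))
      = ∑ y, N (f a (φ (e a))) y * (if h y (ψ (g y)) = a then 1 else 0) := by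
    intro a
    have h1 : ∀ (p : P) (y : Y), (∑ q, L (e a) (g y) p q * N (f a p) y *
        (if h y q = a then 1 else 0))
        = (if p = φ (e a) then 1 else 0) *
            (N (f a p) y * (if h y (ψ (g y)) = a then 1 else 0)) := by
      intro p y
      have : ∀ q, L (e a) (g y) p q * N (f a p) y * (if h y q = a then 1 else 0)
          = (if q = ψ (g y) then 1 else 0) *
              ((if p = φ (e a) then 1 else 0) *
                (N (f a p) y * (if h y q = a then 1 else 0))) := by
        intro q; rw [hrep]; ring
      rw [Finset.sum_congr rfl fun q _ => this q, sum_indic_mul]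
    simp_rw [h1]
    rw [Finset.sum_comm]
    exact Finset.sum_congr rfl fun y _ => sum_indic_mul _ _
  have hval : protVal N L e f g h =
      (1 / 2) * (∑ y, if h y (ψ (g y)) = false then N (f false (φ (e false))) y else 0) +
        (1 / 2) * (∑ y, if h y (ψ (g y)) = true then N (f true (φ (e true))) y else 0) := by
    unfold protVal
    rw [Fintype.sum_bool, step true, step false]
    simp only [mul_ite, mul_one, mul_zero]
    ring
  rw [hval]
  exact le_ciSup (succ_bdd N)
    (⟨f false (φ (e false)), f true (φ (e true)), fun y => h y (ψ (g y))⟩ : X × X × (Y → Bool))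

end Aux

section Aux2

variable {X Y R S P Q : Type*} [Fintype X] [Fintype Y] [Fintype R] [Fintype S]
  [Fintype P] [Fintype Q] [DecidableEq P] [DecidableEq Q] [DecidableEq Y]
  [Nonempty X] [Nonempty R] [Nonempty S]

lemma swap5 {n : ℕ} (G : Bool → P → Y → Q → Fin n → ℝ) :
    (∑ a : Bool, ∑ p, ∑ y, ∑ q, ∑ i, G a p y q i)
      = ∑ i, ∑ a : Bool, ∑ p, ∑ y, ∑ q, G a p y q i :=
  calc (∑ a : Bool, ∑ p, ∑ y, ∑ q, ∑ i, G a p y q i)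
      = ∑ a : Bool, ∑ p, ∑ y, ∑ i, ∑ q, G a p y q i :=
        Finset.sum_congr rfl fun a _ => Finset.sum_congr rfl fun p _ =>
          Finset.sum_congr rfl fun y _ => Finset.sum_comm
    _ = ∑ a : Bool, ∑ p, ∑ i, ∑ y, ∑ q, G a p y q i :=
        Finset.sum_congr rfl fun a _ => Finset.sum_congr rfl fun p _ => Finset.sum_comm
    _ = ∑ a : Bool, ∑ i, ∑ p, ∑ y, ∑ q, G a p y q i :=
        Finset.sum_congr rfl fun a _ => Finset.sum_comm
    _ = ∑ i, ∑ a : Bool, ∑ p, ∑ y, ∑ q, G a p y q i := Finset.sum_comm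

lemma protVal_local_le (N : X → Y → ℝ) (hN : IsChannel N)
    (L : R → S → P → Q → ℝ) (hL : IsLocal L)
    (e : Bool → R) (f : Bool → P → X) (g : Y → S) (h : Y → Q → Bool) :
    protVal N L e f g h ≤ Succ N := by
  obtain ⟨n, w, Ls, hw0, hw1, hld, hrep⟩ := hL
  have hterm : ∀ (a : Bool) (p : P) (y : Y) (q : Q),
      L (e a) (g y) p q * N (f a p) y * (if h y q = a then 1 else 0)
        = ∑ i, w i * (Ls i (e a) (g y) p q * N (f a p) y * (if h y q = a then 1 else 0)) := by
    intro a p y q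
    rw [hrep, Finset.sum_mul, Finset.sum_mul]
    exact Finset.sum_congr rfl fun i _ => by ring
  have lin : protVal N L e f g h = ∑ i, w i * protVal N (Ls i) e f g h := by
    unfold protVal
    simp_rw [hterm]
    rw [swap5]
    simp_rw [← Finset.mul_sum]
    rw [Finset.mul_sum]
    exact Finset.sum_congr rfl fun i _ => by ring
  rw [lin]
  calc (∑ i, w i * protVal N (Ls i) e f g h) ≤ ∑ i, w i * Succ N :=
        Finset.sum_le_sum fun i _ =>
          mul_le_mul_of_nonneg_left (protVal_localdet_le N hN (Ls i) (hld i) e f g h) (hw0 i)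
    _ = Succ N := by rw [← Finset.sum_mul, hw1, one_mul]

lemma protVal_affine (N : X → Y → ℝ) (D L F : R → S → P → Q → ℝ) (α : ℝ)
    (hrep : ∀ r s p q, D r s p q = α * L r s p q + (1 - α) * F r s p q)
    (e : Bool → R) (f : Bool → P → X) (g : Y → S) (h : Y → Q → Bool) :
    protVal N D e f g h = α * protVal N L e f g h + (1 - α) * protVal N F e f g h := by
  have hterm : ∀ (a : Bool) (p : P) (y : Y) (q : Q),
      D (e a) (g y) p q * N (f a p) y * (if h y q = a then 1 else 0)
        = α * (L (e a) (g y) p q * N (f a p) y * (if h y q = a then 1 else 0))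
          + (1 - α) * (F (e a) (g y) p q * N (f a p) y * (if h y q = a then 1 else 0)) := by
    intro a p y q; rw [hrep]; ring
  unfold protVal
  simp_rw [hterm, Finset.sum_add_distrib, ← Finset.mul_sum]
  ring

lemma protVal_ns_le (N : X → Y → ℝ) (hN : IsChannel N)
    (F : R → S → P → Q → ℝ) (hF : IsCorrelation F) (hFNS : NonSignaling F)
    [Nonempty P]
    (e : Bool → R) (f : Bool → P → X) (g : Y → S) (h : Y → Q → Bool) :
    protVal N F e f g h ≤ 1/2 + (2 - 1/(Fintype.card P : ℝ)) * (Succ N - 1/2) := by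
  obtain ⟨s₀⟩ := ‹Nonempty S›
  have hδ : (0:ℝ) ≤ Succ N - 1/2 := by have := succ_ge_half N hN; linarith
  set μ : Bool → P → ℝ := fun a p => ∑ q, F (e a) s₀ p q with hμdef
  set c : Bool → P → Y → ℝ :=
    fun a p y => ∑ q, F (e a) (g y) p q * (if h y q = a then 1 else 0) with hcdef
  have hμ0 : ∀ a p, 0 ≤ μ a p := fun a p => Finset.sum_nonneg fun q _ => hF.1 _ _ _ _
  have hc0 : ∀ a p y, 0 ≤ c a p y := fun a p y =>
    Finset.sum_nonneg fun q _ => mul_nonneg (hF.1 _ _ _ _) (by split <;> norm_num)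
  have hcμ : ∀ a p y, c a p y ≤ μ a p := by
    intro a p y
    have h1 : c a p y ≤ ∑ q, F (e a) (g y) p q :=
      Finset.sum_le_sum fun q _ => by
        by_cases hb : h y q = a <;> simp [hb, hF.1 (e a) (g y) p q]
    simpa [hμdef, hFNS.1 (e a) p (g y) s₀] using h1
  have hμsum : ∀ a, ∑ p, μ a p = 1 := by
    intro a; simp only [hμdef]; exact hF.2 (e a) s₀
  have hcsum : ∀ y, (∑ p, c false p y) + (∑ p, c true p y) = 1 := by
    intro y
    have swap : ∀ a : Bool, (∑ p, c a p y)
        = ∑ q, (∑ p, F (e true) (g y) p q) * (if h y q = a then 1 else 0) := by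
      intro a
      simp only [hcdef]
      rw [Finset.sum_comm]
      exact Finset.sum_congr rfl fun q _ => by
        rw [← Finset.sum_mul, hFNS.2 (g y) q (e a) (e true)]
    rw [swap false, swap true, ← Finset.sum_add_distrib]
    have h2 : ∀ q : Q, (∑ p, F (e true) (g y) p q) * (if h y q = false then 1 else 0)
        + (∑ p, F (e true) (g y) p q) * (if h y q = true then 1 else 0)
        = ∑ p, F (e true) (g y) p q := by
      intro q; cases hb : h y q <;> simp [hb]
    rw [Finset.sum_congr rfl fun q _ => h2 q, Finset.sum_comm]
    exact hF.2 (e true) (g y)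
  have hcard : (0:ℝ) < (Fintype.card P : ℝ) := by exact_mod_cast Fintype.card_pos
  obtain ⟨pstar, hpstar⟩ : ∃ p : P, 1/(Fintype.card P : ℝ) ≤ μ false p := by
    by_contra hcon
    push_neg at hcon
    have hlt : ∑ p, μ false p < ∑ _p : P, 1/(Fintype.card P : ℝ) :=
      Finset.sum_lt_sum_of_nonempty Finset.univ_nonempty fun p _ => hcon p
    rw [hμsum false, Finset.sum_const, Finset.card_univ, nsmul_eq_mul, mul_one_div,
      div_self (ne_of_gt hcard)] at hlt
    exact lt_irrefl _ hlt
  have expand : protVal N F e f g h = (1/2) * ∑ a : Bool, ∑ p, ∑ y, N (f a p) y * c a p y := by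
    unfold protVal
    congr 1
    refine Finset.sum_congr rfl fun a _ => Finset.sum_congr rfl fun p _ =>
      Finset.sum_congr rfl fun y _ => ?_
    simp only [hcdef]
    rw [Finset.mul_sum]
    exact Finset.sum_congr rfl fun q _ => by ring
  have piece : ∀ (a : Bool) (p : P),
      (∑ y, (N (f a p) y - N (f false pstar) y) * c a p y)
        ≤ 2 * (Succ N - 1/2) * μ a p := by
    intro a p
    have h1 : ∀ y, (N (f a p) y - N (f false pstar) y) * c a p y
        ≤ max (N (f a p) y - N (f false pstar) y) 0 * μ a p := by
      intro y
      rcases le_or_gt 0 (N (f a p) y - N (f false pstar) y) with hy | hy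
      · rw [max_eq_left hy]
        exact mul_le_mul_of_nonneg_left (hcμ a p y) hy
      · rw [max_eq_right hy.le, zero_mul]
        exact mul_nonpos_of_nonpos_of_nonneg hy.le (hc0 a p y)
    calc (∑ y, (N (f a p) y - N (f false pstar) y) * c a p y)
        ≤ ∑ y, max (N (f a p) y - N (f false pstar) y) 0 * μ a p :=
          Finset.sum_le_sum fun y _ => h1 y
      _ = (∑ y, max (N (f a p) y - N (f false pstar) y) 0) * μ a p := by
          rw [Finset.sum_mul]
      _ ≤ (2 * Succ N - 1) * μ a p :=
          mul_le_mul_of_nonneg_right (tv_bound N hN _ _) (hμ0 a p)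
      _ = 2 * (Succ N - 1/2) * μ a p := by ring
  have lampart : (∑ a : Bool, ∑ p, ∑ y, N (f false pstar) y * c a p y) = 1 := by
    have hsw : ∀ a : Bool, (∑ p, ∑ y, N (f false pstar) y * c a p y)
        = ∑ y, N (f false pstar) y * ∑ p, c a p y := by
      intro a
      rw [Finset.sum_comm]
      exact Finset.sum_congr rfl fun y _ => by rw [Finset.mul_sum]
    rw [Fintype.sum_bool, hsw true, hsw false, ← Finset.sum_add_distrib]
    have h3 : ∀ y, N (f false pstar) y * (∑ p, c true p y)
        + N (f false pstar) y * (∑ p, c false p y) = N (f false pstar) y := by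
      intro y
      rw [← mul_add, add_comm (∑ p, c true p y), hcsum y, mul_one]
    rw [Finset.sum_congr rfl fun y _ => h3 y]
    exact hN.2 _
  have split : ∀ (a : Bool) (p : P), (∑ y, N (f a p) y * c a p y)
      = (∑ y, (N (f a p) y - N (f false pstar) y) * c a p y)
        + ∑ y, N (f false pstar) y * c a p y := by
    intro a p
    rw [← Finset.sum_add_distrib]
    exact Finset.sum_congr rfl fun y _ => by ring
  have hErase : ∑ p ∈ Finset.univ.erase pstar, μ false p = 1 - μ false pstar := by
    have h4 := Finset.add_sum_erase Finset.univ (μ false) (Finset.mem_univ pstar)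
    have h5 := hμsum false
    linarith
  have btrue : (∑ p, ∑ y, (N (f true p) y - N (f false pstar) y) * c true p y)
      ≤ 2 * (Succ N - 1/2) := by
    calc (∑ p, ∑ y, (N (f true p) y - N (f false pstar) y) * c true p y)
        ≤ ∑ p, 2 * (Succ N - 1/2) * μ true p := Finset.sum_le_sum fun p _ => piece true p
      _ = 2 * (Succ N - 1/2) := by rw [← Finset.mul_sum, hμsum true, mul_one]
  have bfalse : (∑ p, ∑ y, (N (f false p) y - N (f false pstar) y) * c false p y)
      ≤ 2 * (Succ N - 1/2) * (1 - 1/(Fintype.card P : ℝ)) := by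
    rw [← Finset.add_sum_erase Finset.univ _ (Finset.mem_univ pstar)]
    have hz : (∑ y, (N (f false pstar) y - N (f false pstar) y) * c false pstar y) = 0 := by
      simp
    have hrest : (∑ p ∈ Finset.univ.erase pstar,
        ∑ y, (N (f false p) y - N (f false pstar) y) * c false p y)
        ≤ 2 * (Succ N - 1/2) * (1 - μ false pstar) := by
      calc (∑ p ∈ Finset.univ.erase pstar,
            ∑ y, (N (f false p) y - N (f false pstar) y) * c false p y)
          ≤ ∑ p ∈ Finset.univ.erase pstar, 2 * (Succ N - 1/2) * μ false p :=
            Finset.sum_le_sum fun p _ => piece false p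
        _ = 2 * (Succ N - 1/2) * (1 - μ false pstar) := by rw [← Finset.mul_sum, hErase]
    have hmono : 2 * (Succ N - 1/2) * (1 - μ false pstar)
        ≤ 2 * (Succ N - 1/2) * (1 - 1/(Fintype.card P : ℝ)) := by
      apply mul_le_mul_of_nonneg_left _ (by linarith)
      linarith
    linarith
  have main : (∑ a : Bool, ∑ p, ∑ y, N (f a p) y * c a p y)
      ≤ 1 + 2 * (Succ N - 1/2) * (2 - 1/(Fintype.card P : ℝ)) := by
    have hsplit : (∑ a : Bool, ∑ p, ∑ y, N (f a p) y * c a p y)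
        = (∑ a : Bool, ∑ p, ∑ y, (N (f a p) y - N (f false pstar) y) * c a p y)
          + ∑ a : Bool, ∑ p, ∑ y, N (f false pstar) y * c a p y := by
      rw [← Finset.sum_add_distrib]
      refine Finset.sum_congr rfl fun a _ => ?_
      rw [← Finset.sum_add_distrib]
      exact Finset.sum_congr rfl fun p _ => split a p
    rw [hsplit, lampart, Fintype.sum_bool]
    nlinarith [btrue, bfalse]
  rw [expand]
  nlinarith [main]

end Aux2


/-- **Theorem 7.** For any channel `N` and non-signaling correlation `D` whose
Alice-side output alphabet `P` has size `m`,
`Succ(N, D) − 1/2 ≤ (1 + (1 − 1/m)(1 − loc(D))) (Succ(N) − 1/2)`. -/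
theorem succD_le_locFrac_bound {X Y R S P Q : Type*} [Fintype X] [Fintype Y]
    [Fintype R] [Fintype S] [Fintype P] [Fintype Q] [DecidableEq P]
    [DecidableEq Q] [DecidableEq Y] [Nonempty X] [Nonempty R] [Nonempty S]
    (N : X → Y → ℝ) (hN : IsChannel N)
    (D : R → S → P → Q → ℝ) (hD : IsCorrelation D) (hNS : NonSignaling D) :
    SuccD N D - 1 / 2 ≤
      (1 + (1 - 1 / (Fintype.card P : ℝ)) * (1 - locFrac D)) *
        (Succ N - 1 / 2) := by
  -- nonemptiness of P and Q
  have hPne : Nonempty P := by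
    by_contra hc
    rw [not_nonempty_iff] at hc
    have := hD.2 (Classical.arbitrary R) (Classical.arbitrary S)
    simp [Finset.univ_eq_empty] at this
  have hQne : Nonempty Q := by
    by_contra hc
    rw [not_nonempty_iff] at hc
    have := hD.2 (Classical.arbitrary R) (Classical.arbitrary S)
    simp [Finset.univ_eq_empty] at this
  haveI := hPne
  haveI := hQne
  obtain ⟨p₀⟩ := hPne
  obtain ⟨q₀⟩ := hQne
  have hδ : (0:ℝ) ≤ Succ N - 1/2 := by have := succ_ge_half N hN; linarith
  have hcard : (0:ℝ) < (Fintype.card P : ℝ) := by exact_mod_cast Fintype.card_pos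
  have hminv : 1/(Fintype.card P : ℝ) ≤ 1 := by
    rw [div_le_one hcard]
    exact_mod_cast Fintype.card_pos
  set A : Set ℝ := { α : ℝ | 0 ≤ α ∧ α ≤ 1 ∧ ∃ L F : R → S → P → Q → ℝ,
    IsLocal L ∧ IsCorrelation F ∧ NonSignaling F ∧
      ∀ r s p q, D r s p q = α * L r s p q + (1 - α) * F r s p q } with hA
  have hloc : locFrac D = sSup A := rfl
  have h0A : (0:ℝ) ∈ A := by
    refine ⟨le_refl 0, zero_le_one, fun _ _ p q => (if p = p₀ then 1 else 0) * (if q = q₀ then 1 else 0),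
      D, ?_, hD, hNS, fun r s p q => by ring⟩
    exact ⟨1, fun _ => 1, fun _ r s p q => (if p = p₀ then 1 else 0) * (if q = q₀ then 1 else 0),
      fun _ => zero_le_one, by simp, fun _ => ⟨fun _ => p₀, fun _ => q₀, fun _ _ _ _ => rfl⟩,
      fun r s p q => by simp⟩
  have hAne : A.Nonempty := ⟨0, h0A⟩
  set k : ℝ := (1 - 1/(Fintype.card P : ℝ)) * (Succ N - 1/2) with hk
  have hk0 : 0 ≤ k := mul_nonneg (by linarith) hδ
  have key : ∀ π : (Bool → R) × (Bool → P → X) × (Y → S) × (Y → Q → Bool),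
      protVal N D π.1 π.2.1 π.2.2.1 π.2.2.2
        ≤ 1/2 + (2 - 1/(Fintype.card P : ℝ)) * (Succ N - 1/2) - k * locFrac D := by
    intro π
    obtain ⟨e, f, g, h⟩ := π
    have hper : ∀ α ∈ A, protVal N D e f g h
        ≤ 1/2 + (2 - 1/(Fintype.card P : ℝ)) * (Succ N - 1/2) - k * α := by
      intro α hα
      obtain ⟨hα0, hα1, L, F, hL, hF, hFNS, hrep⟩ := hα
      have lin := protVal_affine N D L F α hrep e f g h
      have b1 : protVal N L e f g h ≤ Succ N := protVal_local_le N hN L hL e f g h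
      have b2 : protVal N F e f g h
          ≤ 1/2 + (2 - 1/(Fintype.card P : ℝ)) * (Succ N - 1/2) :=
        protVal_ns_le N hN F hF hFNS e f g h
      have m1 : α * protVal N L e f g h ≤ α * Succ N :=
        mul_le_mul_of_nonneg_left b1 hα0
      have m2 : (1 - α) * protVal N F e f g h
          ≤ (1 - α) * (1/2 + (2 - 1/(Fintype.card P : ℝ)) * (Succ N - 1/2)) :=
        mul_le_mul_of_nonneg_left b2 (by linarith)
      rw [lin, hk]
      nlinarith [m1, m2]
    have hfinal : k * locFrac D
        ≤ 1/2 + (2 - 1/(Fintype.card P : ℝ)) * (Succ N - 1/2) - protVal N D e f g h := by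
      rcases eq_or_lt_of_le hk0 with hk' | hk'
      · rw [← hk', zero_mul]
        have := hper 0 h0A
        linarith
      · have hub : locFrac D
            ≤ (1/2 + (2 - 1/(Fintype.card P : ℝ)) * (Succ N - 1/2) - protVal N D e f g h) / k := by
          rw [hloc]
          refine csSup_le hAne fun α hα => ?_
          rw [le_div_iff₀ hk']
          have := hper α hα
          nlinarith
        calc k * locFrac D
            ≤ k * ((1/2 + (2 - 1/(Fintype.card P : ℝ)) * (Succ N - 1/2) - protVal N D e f g h) / k) :=
              mul_le_mul_of_nonneg_left hub hk0
          _ = _ := by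
              rw [mul_comm, div_mul_cancel₀ _ (ne_of_gt hk')]
    linarith
  have hsup : SuccD N D ≤ 1/2 + (2 - 1/(Fintype.card P : ℝ)) * (Succ N - 1/2) - k * locFrac D :=
    ciSup_le key
  rw [hk] at hsup
  nlinarith [hsup]

end
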